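/- arXiv:1202.2785 — 5 statements merged into one kernel-verified Lean document; each statement's English description precedes it below -/
import Mathlib

section
/- Under the stated assumptions, the true period P of Rayleigh's stretched string satisfies the upper bound P ≤ P̄, where P̄ = 2π/√(2T/(mL)) is Rayleigh's approximate period. -/
open Real MeasureTheory intervalIntegral Set

lemma sqrtint_integrable {r : ℝ} (hr : 0 < r) :
    IntervalIntegrable (fun y => 1 / Real.sqrt (r ^ 2 - y ^ 2)) volume 0 r := by
  have hmaj : IntervalIntegrable (fun y => (1 / Real.sqrt r) * (r - y) ^ (-(1/2) : ℝ)) volume 0 r := by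
    have h1 : IntervalIntegrable (fun x : ℝ => x ^ (-(1/2) : ℝ)) volume 0 r :=
      intervalIntegrable_rpow' (by norm_num)
    have h2 := (h1.comp_sub_left r)
    simp only [sub_zero, sub_self] at h2
    exact (h2.symm).const_mul _
  refine hmaj.mono_fun ?_ ?_
  · apply Measurable.aestronglyMeasurable
    apply Measurable.div measurable_const
    exact (measurable_const.sub (measurable_id.pow_const 2)).sqrt
  · rw [Filter.EventuallyLE, ae_restrict_iff' measurableSet_uIoc]
    refine Filter.Eventually.of_forall (fun y hy => ?_)
    rw [uIoc_of_le hr.le] at hy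
    have hy0 : 0 < y := hy.1
    have hyr : y ≤ r := hy.2
    have hry : 0 ≤ r - y := by linarith
    have key : Real.sqrt (r - y) * Real.sqrt r ≤ Real.sqrt (r ^ 2 - y ^ 2) := by
      rw [← Real.sqrt_mul hry]
      apply Real.sqrt_le_sqrt
      nlinarith
    have h3 : (r - y) ^ (-(1/2) : ℝ) = 1 / Real.sqrt (r - y) := by
      rw [Real.rpow_neg hry, Real.sqrt_eq_rpow]; norm_num
    simp only [norm_mul, Real.norm_eq_abs, abs_of_nonneg (one_div_nonneg.mpr (Real.sqrt_nonneg _)),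
      abs_of_nonneg (Real.rpow_nonneg hry _)]
    rw [h3, div_mul_div_comm, one_mul]
    rcases eq_or_lt_of_le hry with h | h
    · have hyr' : y = r := by linarith
      simp [hyr']
    · apply one_div_le_one_div_of_le
      · positivity
      · rw [mul_comm] at key; exact key

lemma sqrtint_value {r : ℝ} (hr : 0 < r) :
    (∫ y in (0:ℝ)..r, 1 / Real.sqrt (r ^ 2 - y ^ 2)) = π / 2 := by
  have hpi : (0:ℝ) < π / 2 := by positivity
  set g : ℝ → ℝ := fun y => 1 / Real.sqrt (r ^ 2 - y ^ 2) with hg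
  have hmin : min 0 (π/2) = 0 := min_eq_left hpi.le
  have hmax : max 0 (π/2) = π/2 := max_eq_right hpi.le
  -- pointwise value of the substituted integrand on Ico
  have key : ∀ x ∈ Ico (0:ℝ) (π/2), (r * Real.cos x) • g (r * Real.sin x) = 1 := by
    intro x hx
    have hcos : 0 < Real.cos x := Real.cos_pos_of_mem_Ioo
      ⟨by linarith [hx.1, Real.pi_pos], hx.2⟩
    have h1 : r ^ 2 - (r * Real.sin x) ^ 2 = (r * Real.cos x) ^ 2 := by
      have := Real.sin_sq_add_cos_sq x; nlinarith
    have h2 : Real.sqrt (r ^ 2 - (r * Real.sin x) ^ 2) = r * Real.cos x := by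
      rw [h1, Real.sqrt_sq (by positivity)]
    simp only [hg, smul_eq_mul, h2]
    field_simp
  -- a.e. equality to 1 on Icc 0 (π/2)
  have hne : ∀ᵐ x ∂(volume : Measure ℝ), x ≠ π / 2 := by
    rw [ae_iff]; simp [Real.volume_singleton]
  have hae : (fun x => (r * Real.cos x) • g (r * Real.sin x))
      =ᶠ[ae (volume.restrict (Icc (0:ℝ) (π/2)))] (fun _ => (1:ℝ)) := by
    filter_upwards [ae_restrict_mem measurableSet_Icc, ae_restrict_of_ae hne] with x hx hx2
    exact key x ⟨hx.1, lt_of_le_of_ne hx.2 hx2⟩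
  have hsub := integral_comp_smul_deriv''' (a := 0) (b := π/2)
    (f := fun x => r * Real.sin x) (f' := fun x => r * Real.cos x) (g := g)
    (by fun_prop)
    (by
      intro x hx
      exact ((Real.hasDerivAt_sin x).const_mul r).hasDerivWithinAt)
    (by
      -- continuity of g on the open image
      intro y hy
      rw [hmin, hmax] at hy
      obtain ⟨x, hx, rfl⟩ := hy
      have hsin0 : 0 < Real.sin x := Real.sin_pos_of_pos_of_lt_pi hx.1
        (by linarith [hx.2, Real.pi_pos])
      have hcos : 0 < Real.cos x := Real.cos_pos_of_mem_Ioo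
        ⟨by linarith [hx.1, Real.pi_pos], hx.2⟩
      have hsin1 : Real.sin x < 1 := by
        nlinarith [Real.sin_sq_add_cos_sq x, Real.neg_one_le_sin x]
      have hpos : 0 < r ^ 2 - (r * Real.sin x) ^ 2 := by
        nlinarith [mul_pos (mul_pos hr hr)
          (mul_pos (sub_pos.mpr hsin1) (by linarith : (0:ℝ) < 1 + Real.sin x))]
      apply ContinuousWithinAt.mono _ (subset_univ _)
      apply ContinuousAt.continuousWithinAt
      apply ContinuousAt.div continuousAt_const
      · exact (Real.continuous_sqrt.continuousAt).comp (by fun_prop)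
      · exact Real.sqrt_ne_zero'.mpr hpos
    )
    (by
      -- integrable on image of Icc
      have h1 : IntegrableOn g (Icc 0 r) := by
        have h := (sqrtint_integrable hr)
        rw [intervalIntegrable_iff, uIoc_of_le hr.le] at h
        exact (integrableOn_Icc_iff_integrableOn_Ioc).mpr h
      refine h1.mono_set ?_
      rw [uIcc_of_le hpi.le]
      rintro y ⟨x, hx, rfl⟩
      have hs0 : 0 ≤ Real.sin x := Real.sin_nonneg_of_nonneg_of_le_pi hx.1
        (by linarith [hx.2, Real.pi_pos])
      have hs1 : Real.sin x ≤ 1 := Real.sin_le_one x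
      refine ⟨by positivity, ?_⟩
      show r * Real.sin x ≤ r
      nlinarith
    )
    (by
      have : IntegrableOn (fun _ : ℝ => (1:ℝ)) (Icc (0:ℝ) (π/2)) := by
        apply (integrableOn_const_iff).mpr
        exact Or.inr measure_Icc_lt_top
      rw [uIcc_of_le hpi.le]
      exact this.congr hae.symm
    )
  have hval : (∫ x in (0:ℝ)..(π/2), (r * Real.cos x) • g (r * Real.sin x)) = π / 2 := by
    rw [intervalIntegral.integral_congr_ae (g := fun _ => (1:ℝ)) ?_]
    · simp
    · filter_upwards [hne] with x hx hmem
      rw [uIoc_of_le hpi.le] at hmem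
      exact key x ⟨hmem.1.le, lt_of_le_of_ne hmem.2 hx⟩
  simp only [Function.comp_apply] at hsub
  have := hsub.symm.trans hval
  simpa [Real.sin_pi_div_two] using this

theorem rayleigh_period_upper_bound
    (σ m L₀ L y₀ T Pbar P : ℝ)
    (hσ : 0 < σ) (hm : 0 < m) (hL₀ : 0 < L₀) (hL : 0 < L) (hy₀ : 0 < y₀)
    (hLL : L₀ < L)
    (hT : T = σ * (L - L₀) / L₀)
    (hPbar : Pbar = 2 * Real.pi / Real.sqrt (2 * T / (m * L)))
    (hP : P = 4 * Real.sqrt (m / (2 * σ)) *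
      ∫ y in (0:ℝ)..y₀,
        1 / (Real.sqrt (y₀ ^ 2 - y ^ 2) *
          Real.sqrt (1 / L₀ -
            2 / (Real.sqrt (L ^ 2 + y ^ 2) + Real.sqrt (L ^ 2 + y₀ ^ 2))))) :
    P ≤ Pbar := by
  have hc2 : (0:ℝ) < 1 / L₀ - 1 / L := by
    rw [sub_pos]
    exact one_div_lt_one_div_of_lt hL₀ hLL
  set c : ℝ := Real.sqrt (1 / L₀ - 1 / L) with hc
  have hcpos : 0 < c := Real.sqrt_pos.mpr hc2
  set F : ℝ → ℝ := fun y =>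
      1 / (Real.sqrt (y₀ ^ 2 - y ^ 2) *
        Real.sqrt (1 / L₀ -
          2 / (Real.sqrt (L ^ 2 + y ^ 2) + Real.sqrt (L ^ 2 + y₀ ^ 2)))) with hF
  set G : ℝ → ℝ := fun y => (1 / c) * (1 / Real.sqrt (y₀ ^ 2 - y ^ 2)) with hG
  -- pointwise bound F ≤ G
  have hFG : ∀ y, F y ≤ G y := by
    intro y
    have hs1 : L ≤ Real.sqrt (L ^ 2 + y ^ 2) :=
      (Real.le_sqrt hL.le (by positivity)).mpr (by nlinarith [sq_nonneg y])
    have hs2 : L ≤ Real.sqrt (L ^ 2 + y₀ ^ 2) :=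
      (Real.le_sqrt hL.le (by positivity)).mpr (by nlinarith [sq_nonneg y₀])
    have hsum : 0 < Real.sqrt (L ^ 2 + y ^ 2) + Real.sqrt (L ^ 2 + y₀ ^ 2) := by linarith
    have hdivle : 2 / (Real.sqrt (L ^ 2 + y ^ 2) + Real.sqrt (L ^ 2 + y₀ ^ 2)) ≤ 1 / L := by
      rw [div_le_div_iff₀ hsum hL]
      linarith
    have hb : c ≤ Real.sqrt (1 / L₀ -
        2 / (Real.sqrt (L ^ 2 + y ^ 2) + Real.sqrt (L ^ 2 + y₀ ^ 2))) :=
      Real.sqrt_le_sqrt (by linarith)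
    simp only [hF, hG]
    rcases eq_or_lt_of_le (Real.sqrt_nonneg (y₀ ^ 2 - y ^ 2)) with h0 | h0
    · rw [← h0]
      simp
    · have hGc : 1 / c * (1 / Real.sqrt (y₀ ^ 2 - y ^ 2)) =
          1 / (Real.sqrt (y₀ ^ 2 - y ^ 2) * c) := by
        rw [div_mul_div_comm, one_mul, mul_comm]
      rw [hGc]
      apply one_div_le_one_div_of_le (by positivity)
      exact mul_le_mul_of_nonneg_left hb h0.le
  have hI0 : ∀ y, 0 ≤ F y := fun y => by
    simp only [hF]
    positivity
  have hGint : IntegrableOn G (Ioc 0 y₀) := by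
    have h := ((sqrtint_integrable hy₀).const_mul (1/c))
    rw [intervalIntegrable_iff, uIoc_of_le hy₀.le] at h
    exact h
  have hIle : (∫ y in (0:ℝ)..y₀, F y) ≤ ∫ y in (0:ℝ)..y₀, G y := by
    rw [intervalIntegral.integral_of_le hy₀.le, intervalIntegral.integral_of_le hy₀.le]
    exact integral_mono_of_nonneg (Filter.Eventually.of_forall hI0) hGint
      (Filter.Eventually.of_forall hFG)
  have hGval : (∫ y in (0:ℝ)..y₀, G y) = (1/c) * (π/2) := by
    simp only [hG]
    rw [intervalIntegral.integral_const_mul, sqrtint_value hy₀]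
  have hK : 0 ≤ 4 * Real.sqrt (m / (2*σ)) := by positivity
  have hPle : P ≤ 4 * Real.sqrt (m / (2*σ)) * ((1/c) * (π/2)) := by
    rw [hP]
    exact mul_le_mul_of_nonneg_left (hIle.trans_eq hGval) hK
  have hfrac : 2 * T / (m * L) = (2*σ/m) * (1/L₀ - 1/L) := by
    rw [hT]
    field_simp
  have hsq : Real.sqrt (2*T/(m*L)) = Real.sqrt (2*σ/m) * c := by
    rw [hfrac, Real.sqrt_mul (by positivity), hc]
  have hsm : Real.sqrt (m/(2*σ)) = (Real.sqrt (2*σ/m))⁻¹ := by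
    rw [show m/(2*σ) = (2*σ/m)⁻¹ by field_simp, Real.sqrt_inv]
  have hspos : 0 < Real.sqrt (2*σ/m) := Real.sqrt_pos.mpr (by positivity)
  rw [hPbar, hsq]
  refine hPle.trans_eq ?_
  rw [hsm]
  field_simp
  ring
end

section
/- Under the stated assumptions, the true period P of Rayleigh's stretched string satisfies the lower bound P ≥ 2π/√(2T/(mL) + σ·y₀²/(m·L₀·L²)). -/
open Real MeasureTheory intervalIntegral

lemma aux_integrable (c : ℝ) (hc : 0 < c) :
    IntervalIntegrable (fun y => 1 / Real.sqrt (c ^ 2 - y ^ 2)) volume 0 c := by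
  have hmaj : IntervalIntegrable (fun y => (Real.sqrt c)⁻¹ * (c - y) ^ (-(1/2) : ℝ))
      volume 0 c := by
    have h1 : IntervalIntegrable (fun x : ℝ => x ^ (-(1/2) : ℝ)) volume 0 c :=
      intervalIntegrable_rpow' (by norm_num)
    have h2 := (h1.comp_sub_left c)
    simp only [sub_zero, sub_self] at h2
    exact (h2.symm).const_mul _
  refine hmaj.mono_fun ?_ ?_
  · exact (measurable_const.div
      ((measurable_const.sub (measurable_id.pow_const 2)).sqrt)).aestronglyMeasurable
  · filter_upwards [MeasureTheory.ae_restrict_mem measurableSet_uIoc] with y hy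
    have hy' : y ∈ Set.Ioc 0 c := by rwa [Set.uIoc_of_le hc.le] at hy
    have h0y : 0 < y := hy'.1
    have hyc : y ≤ c := hy'.2
    have hsub : (0:ℝ) ≤ c - y := by linarith
    have hfac : Real.sqrt (c ^ 2 - y ^ 2) = Real.sqrt (c - y) * Real.sqrt (c + y) := by
      rw [← Real.sqrt_mul hsub]; ring_nf
    have hrw : (c - y) ^ (-(1/2) : ℝ) = (Real.sqrt (c - y))⁻¹ := by
      rw [Real.rpow_neg hsub, Real.sqrt_eq_rpow]
    rw [Real.norm_eq_abs, Real.norm_eq_abs, abs_of_nonneg (by positivity),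
      abs_of_nonneg (by positivity), hfac, hrw]
    rcases eq_or_lt_of_le hyc with h | h
    · subst h; simp
    · have hcy : 0 < c - y := by linarith
      rw [one_div, ← mul_inv]
      apply inv_anti₀ (by positivity)
      rw [mul_comm (Real.sqrt c)]
      gcongr
      linarith

lemma aux_integral (c : ℝ) (hc : 0 < c) :
    ∫ y in (0:ℝ)..c, 1 / Real.sqrt (c ^ 2 - y ^ 2) = Real.pi / 2 := by
  have h := intervalIntegral.integral_eq_sub_of_hasDeriv_right_of_le (a := 0) (b := c)
    (f := fun y => Real.arcsin (y / c)) (f' := fun y => 1 / Real.sqrt (c ^ 2 - y ^ 2))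
    hc.le
    ((Real.continuous_arcsin.comp (continuous_id.div_const c)).continuousOn)
    (fun y hy => by
      have h0y : 0 < y := hy.1
      have hyc : y < c := hy.2
      have hx1 : y / c ≠ -1 := by
        have : 0 < y / c := div_pos h0y hc
        linarith
      have hx2 : y / c ≠ 1 := by
        have : y / c < 1 := (div_lt_one hc).2 hyc
        linarith
      have hd := (Real.hasDerivAt_arcsin hx1 hx2).comp y ((hasDerivAt_id y).div_const c)
      have heq : 1 / Real.sqrt (1 - (y / c) ^ 2) * (1 / c) = 1 / Real.sqrt (c ^ 2 - y ^ 2) := by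
        have h1 : (1 : ℝ) - (y / c) ^ 2 = (c ^ 2 - y ^ 2) / c ^ 2 := by
          field_simp
        rw [h1, Real.sqrt_div (by nlinarith) (c ^ 2), Real.sqrt_sq hc.le]
        rw [div_div_eq_mul_div, div_mul_eq_mul_div]
        have hpos : (0:ℝ) < Real.sqrt (c ^ 2 - y ^ 2) := Real.sqrt_pos.2 (by nlinarith)
        field_simp
      simp only [Function.comp_def] at hd
      have : HasDerivAt (fun y => Real.arcsin (y / c)) (1 / Real.sqrt (c ^ 2 - y ^ 2)) y := by
        rw [← heq]
        exact hd
      exact this.hasDerivWithinAt)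
    (aux_integrable c hc)
  rw [h]
  simp [div_self hc.ne']

set_option maxHeartbeats 1000000 in
theorem rayleigh_period_lower_bound
    (σ m L₀ L y₀ T P : ℝ)
    (hσ : 0 < σ) (hm : 0 < m) (hL₀ : 0 < L₀) (hL : 0 < L) (hy₀ : 0 < y₀)
    (hLL : L₀ < L)
    (hT : T = σ * (L - L₀) / L₀)
    (hP : P = 4 * Real.sqrt (m / (2 * σ)) *
      ∫ y in (0:ℝ)..y₀,
        1 / (Real.sqrt (y₀ ^ 2 - y ^ 2) *
          Real.sqrt (1 / L₀ -
            2 / (Real.sqrt (L ^ 2 + y ^ 2) + Real.sqrt (L ^ 2 + y₀ ^ 2))))) :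
    2 * Real.pi / Real.sqrt (2 * T / (m * L) + σ * y₀ ^ 2 / (m * L₀ * L ^ 2)) ≤ P := by
  set s : ℝ := Real.sqrt (L ^ 2 + y₀ ^ 2) with hs_def
  have hsL : L < s := by
    have : Real.sqrt (L ^ 2) < Real.sqrt (L ^ 2 + y₀ ^ 2) :=
      Real.sqrt_lt_sqrt (by positivity) (by nlinarith)
    rwa [Real.sqrt_sq hL.le] at this
  have hs0 : 0 < s := lt_trans hL hsL
  have hs2 : s ^ 2 = L ^ 2 + y₀ ^ 2 := Real.sq_sqrt (by positivity)
  have hL₀s : L₀ < s := lt_trans hLL hsL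
  set A : ℝ := 1 / L₀ - 1 / s with hA_def
  have hA : 0 < A := by
    have : 1 / s < 1 / L₀ := one_div_lt_one_div_of_lt hL₀ hL₀s
    simp only [hA_def]; linarith
  set f : ℝ → ℝ := fun y => 1 / L₀ - 2 / (Real.sqrt (L ^ 2 + y ^ 2) + s) with hf_def
  set flb : ℝ := 1 / L₀ - 2 / (L + s) with hflb_def
  have hflb : 0 < flb := by
    have h1 : 2 * L₀ < L + s := by linarith
    have h2 : 2 / (L + s) < 1 / L₀ := by
      rw [div_lt_div_iff₀ (by linarith) hL₀]; linarith
    simp only [hflb_def]; linarith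
  have hfge : ∀ y : ℝ, flb ≤ f y := by
    intro y
    have h1 : L ≤ Real.sqrt (L ^ 2 + y ^ 2) := by
      have := Real.sqrt_le_sqrt (le_add_of_nonneg_right (sq_nonneg y) : L ^ 2 ≤ L ^ 2 + y ^ 2)
      rwa [Real.sqrt_sq hL.le] at this
    have h2 : 2 / (Real.sqrt (L ^ 2 + y ^ 2) + s) ≤ 2 / (L + s) := by
      rw [div_le_div_iff₀ (by linarith) (by linarith)]; nlinarith
    simp only [hf_def, hflb_def]; linarith
  have hfpos : ∀ y : ℝ, 0 < f y := fun y => lt_of_lt_of_le hflb (hfge y)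
  have hfA : ∀ y ∈ Set.Icc (0:ℝ) y₀, f y ≤ A := by
    intro y hy
    have h1 : Real.sqrt (L ^ 2 + y ^ 2) ≤ s :=
      Real.sqrt_le_sqrt (by nlinarith [hy.1, hy.2])
    have h2 : 1 / s ≤ 2 / (Real.sqrt (L ^ 2 + y ^ 2) + s) := by
      rw [div_le_div_iff₀ hs0 (by positivity)]
      nlinarith [Real.sqrt_nonneg (L ^ 2 + y ^ 2)]
    simp only [hf_def, hA_def]; linarith
  set g : ℝ → ℝ := fun y =>
    1 / (Real.sqrt (y₀ ^ 2 - y ^ 2) * Real.sqrt (f y)) with hg_def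
  set b : ℝ → ℝ := fun y => 1 / Real.sqrt (y₀ ^ 2 - y ^ 2) with hb_def
  have hb_int : IntervalIntegrable b volume 0 y₀ := aux_integrable y₀ hy₀
  -- g is interval integrable
  have hg_meas : AEStronglyMeasurable g (volume.restrict (Set.uIoc (0:ℝ) y₀)) := by
    apply Measurable.aestronglyMeasurable
    apply Measurable.div measurable_const
    apply Measurable.mul
    · exact (measurable_const.sub (measurable_id.pow_const 2)).sqrt
    · exact (measurable_const.sub
        (measurable_const.div
          (((measurable_const.add (measurable_id.pow_const 2)).sqrt).add_const s))).sqrt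
  have hg_int : IntervalIntegrable g volume 0 y₀ := by
    refine ((hb_int.const_mul (Real.sqrt flb)⁻¹)).mono_fun hg_meas ?_
    filter_upwards [MeasureTheory.ae_restrict_mem measurableSet_uIoc] with y hy
    have hy' : y ∈ Set.Ioc 0 y₀ := by rwa [Set.uIoc_of_le hy₀.le] at hy
    rw [Real.norm_eq_abs, Real.norm_eq_abs, abs_of_nonneg (by positivity),
      abs_of_nonneg (by positivity)]
    rcases eq_or_lt_of_le hy'.2 with h | h
    · have : y₀ ^ 2 - y ^ 2 = 0 := by rw [h]; ring
      simp only [hg_def, hb_def, this, Real.sqrt_zero, zero_mul, div_zero, mul_zero,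
        one_div, inv_zero]
      simp
    · have hr : 0 < Real.sqrt (y₀ ^ 2 - y ^ 2) := Real.sqrt_pos.2 (by nlinarith [hy'.1])
      have hfy : 0 < Real.sqrt (f y) := Real.sqrt_pos.2 (hfpos y)
      simp only [hg_def, hb_def]
      rw [one_div, mul_comm ((Real.sqrt flb)⁻¹), one_div, ← mul_inv]
      apply inv_anti₀ (by positivity)
      gcongr
      exact hfge y
  -- lower bound function
  set h : ℝ → ℝ := fun y => (Real.sqrt A)⁻¹ * b y with hh_def
  have hh_int : IntervalIntegrable h volume 0 y₀ := hb_int.const_mul _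
  have hmono : ∀ y ∈ Set.Icc (0:ℝ) y₀, h y ≤ g y := by
    intro y hy
    rcases eq_or_lt_of_le hy.2 with hcase | hcase
    · have : y₀ ^ 2 - y ^ 2 = 0 := by rw [hcase]; ring
      simp [hh_def, hg_def, hb_def, this]
    · have hr : 0 < Real.sqrt (y₀ ^ 2 - y ^ 2) := Real.sqrt_pos.2 (by nlinarith [hy.1])
      have hfy : 0 < Real.sqrt (f y) := Real.sqrt_pos.2 (hfpos y)
      simp only [hh_def, hg_def, hb_def]
      rw [one_div, one_div, mul_comm ((Real.sqrt A)⁻¹), ← mul_inv]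
      apply inv_anti₀ (by positivity)
      exact mul_le_mul_of_nonneg_left (Real.sqrt_le_sqrt (hfA y hy)) hr.le
  have hint_ge : (Real.sqrt A)⁻¹ * (Real.pi / 2) ≤ ∫ y in (0:ℝ)..y₀, g y := by
    have := intervalIntegral.integral_mono_on hy₀.le hh_int hg_int hmono
    rwa [hh_def, intervalIntegral.integral_const_mul, hb_def, aux_integral y₀ hy₀] at this
  -- combine
  have hPge : 4 * Real.sqrt (m / (2 * σ)) * ((Real.sqrt A)⁻¹ * (Real.pi / 2)) ≤ P := by
    rw [hP]
    apply mul_le_mul_of_nonneg_left _ (by positivity)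
    exact hint_ge
  refine le_trans ?_ hPge
  -- final algebra
  set K : ℝ := 2 * T / (m * L) + σ * y₀ ^ 2 / (m * L₀ * L ^ 2) with hK_def
  have hKeq : K = 2 * σ / m * ((L - L₀) / (L₀ * L) + y₀ ^ 2 / (2 * L₀ * L ^ 2)) := by
    rw [hK_def, hT]; field_simp
  have hy2 : y₀ ^ 2 = s ^ 2 - L ^ 2 := by linarith [hs2]
  have hkey0 : A ≤ (L - L₀) / (L₀ * L) + y₀ ^ 2 / (2 * L₀ * L ^ 2) := by
    rw [hy2, ← sub_nonneg]
    have hfact : (L - L₀) / (L₀ * L) + (s ^ 2 - L ^ 2) / (2 * L₀ * L ^ 2) - A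
        = (s - L) * (s * (s + L) - 2 * L₀ * L) / (2 * L₀ * L ^ 2 * s) := by
      rw [hA_def]; field_simp
      ring
    rw [hfact]
    have h1 : (0:ℝ) ≤ s - L := by linarith
    have h2 : (0:ℝ) ≤ s * (s + L) - 2 * L₀ * L := by nlinarith
    apply div_nonneg (mul_nonneg h1 h2) (by positivity)
  have hkey : 2 * σ * A / m ≤ K := by
    rw [hKeq]
    calc 2 * σ * A / m = 2 * σ / m * A := by ring
      _ ≤ 2 * σ / m * ((L - L₀) / (L₀ * L) + y₀ ^ 2 / (2 * L₀ * L ^ 2)) :=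
          mul_le_mul_of_nonneg_left hkey0 (by positivity)
  have hApos : 0 < 2 * σ * A / m := by positivity
  have hKpos : 0 < K := lt_of_lt_of_le hApos hkey
  have hinv : K⁻¹ ≤ m / (2 * σ) / A := by
    have h1 : K⁻¹ ≤ (2 * σ * A / m)⁻¹ := inv_anti₀ hApos hkey
    have h2 : (2 * σ * A / m)⁻¹ = m / (2 * σ) / A := by
      rw [inv_div, div_div]
    linarith [h1, h2.symm.le]
  calc 2 * Real.pi / Real.sqrt K = 2 * Real.pi * Real.sqrt K⁻¹ := by
        rw [Real.sqrt_inv, div_eq_mul_inv]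
    _ ≤ 2 * Real.pi * Real.sqrt (m / (2 * σ) / A) := by
        have := Real.sqrt_le_sqrt hinv
        have hpi : (0:ℝ) ≤ 2 * Real.pi := by positivity
        nlinarith [this, hpi]
    _ = 4 * Real.sqrt (m / (2 * σ)) * ((Real.sqrt A)⁻¹ * (Real.pi / 2)) := by
        rw [Real.sqrt_div (by positivity) A, div_eq_mul_inv]
        ring
end

section
/- Let y : ℝ → ℝ be a twice differentiable function satisfying Rayleigh's equation of motion y''(t) = −(2σ/m)·(√(L² + y(t)²) − L₀)/(L₀·√(L² + y(t)²))·y(t) for all t, with initial conditions y(0) = y₀ and y'(0) = 0. Then for every t one has the energy identity (y'(t))² = (2σ/m)·(y₀² − y(t)²)·(1/L₀ − 2/(√(L² + y(t)²) + √(L² + y₀²))). -/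
open Real

theorem rayleigh_energy_identity
    (σ m L₀ L y₀ : ℝ)
    (hσ : 0 < σ) (hm : 0 < m) (hL₀ : 0 < L₀) (hL : 0 < L) (hy₀ : 0 < y₀)
    (hLL : L₀ < L)
    (y : ℝ → ℝ)
    (hy : ∀ t, HasDerivAt y (deriv y t) t)
    (hy' : ∀ t, HasDerivAt (deriv y) (deriv (deriv y) t) t)
    (hODE : ∀ t, deriv (deriv y) t =
      -(2 * σ / m) * ((Real.sqrt (L ^ 2 + y t ^ 2) - L₀) /
        (L₀ * Real.sqrt (L ^ 2 + y t ^ 2))) * y t)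
    (h0 : y 0 = y₀) (h0' : deriv y 0 = 0) :
    ∀ t, (deriv y t) ^ 2 =
      (2 * σ / m) * (y₀ ^ 2 - y t ^ 2) *
        (1 / L₀ - 2 / (Real.sqrt (L ^ 2 + y t ^ 2) + Real.sqrt (L ^ 2 + y₀ ^ 2))) := by
  set k := 2 * σ / m with hk
  have hS : ∀ u : ℝ, (0:ℝ) < L ^ 2 + u ^ 2 := fun u => by positivity
  have hSpos : ∀ u : ℝ, 0 < Real.sqrt (L ^ 2 + u ^ 2) :=
    fun u => Real.sqrt_pos.mpr (hS u)
  set F : ℝ → ℝ := fun t =>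
    (deriv y t) ^ 2 / 2 + k * ((y t) ^ 2 / (2 * L₀) - Real.sqrt (L ^ 2 + (y t) ^ 2))
    with hF
  have hFder : ∀ t, HasDerivAt F 0 t := by
    intro t
    have h1 : HasDerivAt (fun t => (deriv y t) ^ 2 / 2)
        (deriv y t * deriv (deriv y) t) t := by
      have := ((hy' t).pow 2).div_const 2
      refine this.congr_deriv ?_
      ring
    have h2 : HasDerivAt (fun t => (y t) ^ 2) (2 * y t * deriv y t) t := by
      have := (hy t).fun_pow 2
      simpa [mul_comm, mul_assoc] using this
    have h3 : HasDerivAt (fun t => Real.sqrt (L ^ 2 + (y t) ^ 2))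
        (y t * deriv y t / Real.sqrt (L ^ 2 + (y t) ^ 2)) t := by
      have hinner : HasDerivAt (fun t => L ^ 2 + (y t) ^ 2) (2 * y t * deriv y t) t :=
        by simpa using (hasDerivAt_const t (L ^ 2)).fun_add h2
      have hsq := (Real.hasDerivAt_sqrt (ne_of_gt (hS (y t)))).comp t hinner
      refine hsq.congr_deriv ?_
      field_simp
    have hsum : HasDerivAt F
        (deriv y t * deriv (deriv y) t +
          k * (2 * y t * deriv y t / (2 * L₀) -
            y t * deriv y t / Real.sqrt (L ^ 2 + (y t) ^ 2))) t :=
      h1.add (((h2.div_const (2 * L₀)).sub h3).const_mul k)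
    convert hsum using 1
    rw [hODE t]
    have hs := hSpos (y t)
    field_simp
    ring
  have hconst : ∀ t, F t = F 0 := fun t =>
    is_const_of_deriv_eq_zero (fun s => (hFder s).differentiableAt)
      (fun s => (hFder s).deriv) t 0
  intro t
  have hEt := hconst t
  set S := Real.sqrt (L ^ 2 + y t ^ 2) with hSdef
  set S₀ := Real.sqrt (L ^ 2 + y₀ ^ 2) with hS0def
  have hS2 : S ^ 2 = L ^ 2 + y t ^ 2 := Real.sq_sqrt (le_of_lt (hS (y t)))
  have hS02 : S₀ ^ 2 = L ^ 2 + y₀ ^ 2 := Real.sq_sqrt (le_of_lt (hS y₀))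
  have hSp : 0 < S := hSpos (y t)
  have hS0p : 0 < S₀ := hSpos y₀
  have hsum : 0 < S + S₀ := by linarith
  have hfac : y₀ ^ 2 - y t ^ 2 = (S₀ - S) * (S₀ + S) := by nlinarith [hS2, hS02]
  have hE : (deriv y t) ^ 2 / 2 + k * ((y t) ^ 2 / (2 * L₀) - S) =
      k * (y₀ ^ 2 / (2 * L₀) - S₀) := by
    have := hEt
    simp only [hF, h0, h0'] at this
    simpa [hS0def] using this
  have hkey : (y₀ ^ 2 - y t ^ 2) * (2 / (S + S₀)) = 2 * (S₀ - S) := by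
    rw [hfac]
    field_simp
    ring
  have : (deriv y t) ^ 2 = k * ((y₀ ^ 2 - y t ^ 2) / L₀ - 2 * (S₀ - S)) := by
    linear_combination 2 * hE
  rw [this, ← hkey]
  field_simp
end

section
/- Under the stated assumptions, the function y ↦ 1/(√(y₀² − y²) · √(1/L₀ − 2/(√(L² + y²) + √(L² + y₀²)))) is interval-integrable on [0, y₀] with respect to Lebesgue measure; consequently the true period P is a well-defined finite positive real number. -/
open Real MeasureTheory intervalIntegral
open Set
open scoped Interval

theorem rayleigh_integrand_intervalIntegrable_and_period_pos
    (σ m L₀ L y₀ : ℝ)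
    (hσ : 0 < σ) (hm : 0 < m) (hL₀ : 0 < L₀) (hL : 0 < L) (hy₀ : 0 < y₀)
    (hLL : L₀ < L) :
    IntervalIntegrable
      (fun y : ℝ =>
        1 / (Real.sqrt (y₀ ^ 2 - y ^ 2) *
          Real.sqrt (1 / L₀ -
            2 / (Real.sqrt (L ^ 2 + y ^ 2) + Real.sqrt (L ^ 2 + y₀ ^ 2)))))
      MeasureTheory.volume 0 y₀ ∧
    0 < 4 * Real.sqrt (m / (2 * σ)) *
      ∫ y in (0:ℝ)..y₀,
        1 / (Real.sqrt (y₀ ^ 2 - y ^ 2) *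
          Real.sqrt (1 / L₀ -
            2 / (Real.sqrt (L ^ 2 + y ^ 2) + Real.sqrt (L ^ 2 + y₀ ^ 2)))) := by
  set f : ℝ → ℝ := fun y =>
    1 / (Real.sqrt (y₀ ^ 2 - y ^ 2) *
      Real.sqrt (1 / L₀ -
        2 / (Real.sqrt (L ^ 2 + y ^ 2) + Real.sqrt (L ^ 2 + y₀ ^ 2)))) with hf
  -- constant lower bound on second sqrt's argument
  set c₀ : ℝ := 1 / L₀ - 1 / L with hc₀
  have hc₀pos : 0 < c₀ := by
    rw [hc₀, sub_pos]
    exact one_div_lt_one_div_of_lt hL₀ hLL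
  have hg : ∀ y : ℝ, c₀ ≤ 1 / L₀ -
      2 / (Real.sqrt (L ^ 2 + y ^ 2) + Real.sqrt (L ^ 2 + y₀ ^ 2)) := by
    intro y
    have h1 : L ≤ Real.sqrt (L ^ 2 + y ^ 2) := by
      nlinarith [Real.sq_sqrt (by positivity : (0:ℝ) ≤ L ^ 2 + y ^ 2),
        Real.sqrt_nonneg (L ^ 2 + y ^ 2)]
    have h2 : L ≤ Real.sqrt (L ^ 2 + y₀ ^ 2) := by
      nlinarith [Real.sq_sqrt (by positivity : (0:ℝ) ≤ L ^ 2 + y₀ ^ 2),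
        Real.sqrt_nonneg (L ^ 2 + y₀ ^ 2)]
    have hsum : 2 * L ≤ Real.sqrt (L ^ 2 + y ^ 2) + Real.sqrt (L ^ 2 + y₀ ^ 2) := by
      linarith
    have : 2 / (Real.sqrt (L ^ 2 + y ^ 2) + Real.sqrt (L ^ 2 + y₀ ^ 2)) ≤ 2 / (2 * L) :=
      div_le_div_of_nonneg_left (by norm_num) (by linarith) hsum
    have h2L : (2:ℝ) / (2 * L) = 1 / L := by field_simp
    rw [hc₀]
    linarith [this, h2L ▸ this]
  -- dominating function
  set C : ℝ := 1 / (Real.sqrt c₀ * Real.sqrt y₀) with hC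
  have hCpos : 0 < C := by positivity
  have hdom : IntervalIntegrable (fun y => C * (y₀ - y) ^ (-(1:ℝ)/2)) volume 0 y₀ := by
    have h1 : IntervalIntegrable (fun x : ℝ => x ^ (-(1:ℝ)/2)) volume 0 y₀ :=
      intervalIntegrable_rpow' (by norm_num)
    have h2 := (h1.comp_sub_left y₀)
    simp only [sub_zero, sub_self] at h2
    exact (h2.symm.const_mul C)
  have hmeas : AEStronglyMeasurable f (volume.restrict (Ι (0:ℝ) y₀)) := by
    apply Measurable.aestronglyMeasurable
    fun_prop
  have hbound : ∀ y ∈ Ι (0:ℝ) y₀, ‖f y‖ ≤ C * (y₀ - y) ^ (-(1:ℝ)/2) := by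
    intro y hy
    rw [uIoc_of_le hy₀.le] at hy
    obtain ⟨hy0, hyle⟩ := hy
    have hA0 : 0 ≤ y₀ ^ 2 - y ^ 2 := by nlinarith
    have hfy : f y = 1 / (Real.sqrt (y₀ ^ 2 - y ^ 2) *
        Real.sqrt (1 / L₀ - 2 / (Real.sqrt (L ^ 2 + y ^ 2) + Real.sqrt (L ^ 2 + y₀ ^ 2)))) := rfl
    rcases eq_or_lt_of_le hyle with heq | hlt
    · -- y = y₀ : f y = 0, RHS = C * 0
      have h0 : y₀ ^ 2 - y ^ 2 = 0 := by rw [heq]; ring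
      rw [hfy, h0, Real.sqrt_zero, zero_mul, div_zero, norm_zero]
      have h0' : (y₀ - y) = 0 := by rw [heq]; ring
      rw [h0', Real.zero_rpow (by norm_num)]
      positivity
    · have hA : Real.sqrt (y₀ * (y₀ - y)) ≤ Real.sqrt (y₀ ^ 2 - y ^ 2) := by
        apply Real.sqrt_le_sqrt; nlinarith
      have hApos : 0 < Real.sqrt (y₀ ^ 2 - y ^ 2) := by
        apply Real.sqrt_pos.mpr; nlinarith
      have hB : Real.sqrt c₀ ≤ Real.sqrt (1 / L₀ -
          2 / (Real.sqrt (L ^ 2 + y ^ 2) + Real.sqrt (L ^ 2 + y₀ ^ 2))) :=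
        Real.sqrt_le_sqrt (hg y)
      have hBpos : 0 < Real.sqrt (1 / L₀ -
          2 / (Real.sqrt (L ^ 2 + y ^ 2) + Real.sqrt (L ^ 2 + y₀ ^ 2))) :=
        lt_of_lt_of_le (Real.sqrt_pos.mpr hc₀pos) hB
      have hprod : Real.sqrt c₀ * Real.sqrt (y₀ * (y₀ - y)) ≤
          Real.sqrt (y₀ ^ 2 - y ^ 2) * Real.sqrt (1 / L₀ -
            2 / (Real.sqrt (L ^ 2 + y ^ 2) + Real.sqrt (L ^ 2 + y₀ ^ 2))) := by
        calc Real.sqrt c₀ * Real.sqrt (y₀ * (y₀ - y))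
            ≤ Real.sqrt c₀ * Real.sqrt (y₀ ^ 2 - y ^ 2) :=
              mul_le_mul_of_nonneg_left hA (Real.sqrt_nonneg _)
          _ ≤ _ := by
              rw [mul_comm]
              exact mul_le_mul_of_nonneg_left hB hApos.le
      have hRHSpos : 0 < Real.sqrt c₀ * Real.sqrt (y₀ * (y₀ - y)) := by
        have : 0 < y₀ * (y₀ - y) := by nlinarith
        positivity
      have hfnn : 0 ≤ f y := by rw [hfy]; positivity
      rw [Real.norm_of_nonneg hfnn, hfy]
      have key : 1 / (Real.sqrt (y₀ ^ 2 - y ^ 2) * Real.sqrt (1 / L₀ -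
            2 / (Real.sqrt (L ^ 2 + y ^ 2) + Real.sqrt (L ^ 2 + y₀ ^ 2)))) ≤
          1 / (Real.sqrt c₀ * Real.sqrt (y₀ * (y₀ - y))) :=
        one_div_le_one_div_of_le hRHSpos hprod
      refine key.trans (le_of_eq ?_)
      have hrp : (y₀ - y) ^ (-(1:ℝ)/2) = (Real.sqrt (y₀ - y))⁻¹ := by
        rw [show (-(1:ℝ)/2) = -(1/2) by ring, Real.rpow_neg (by linarith),
          ← Real.sqrt_eq_rpow]
      rw [Real.sqrt_mul hy₀.le, hrp, hC]
      have h1 : Real.sqrt c₀ ≠ 0 := by positivity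
      have h2 : Real.sqrt y₀ ≠ 0 := by positivity
      have h3 : Real.sqrt (y₀ - y) ≠ 0 := by
        have : 0 < y₀ - y := by linarith
        positivity
      field_simp
  have hint : IntervalIntegrable f volume 0 y₀ :=
    hdom.mono_fun' hmeas (MeasureTheory.ae_restrict_of_forall_mem measurableSet_uIoc hbound)
  refine ⟨hint, ?_⟩
  have hpos : 0 < ∫ y in (0:ℝ)..y₀, f y := by
    apply intervalIntegral_pos_of_pos_on hint _ hy₀
    intro x hx
    have hA : 0 < Real.sqrt (y₀ ^ 2 - x ^ 2) := by
      apply Real.sqrt_pos.mpr; nlinarith [hx.1, hx.2]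
    have hB : 0 < Real.sqrt (1 / L₀ -
        2 / (Real.sqrt (L ^ 2 + x ^ 2) + Real.sqrt (L ^ 2 + y₀ ^ 2))) :=
      lt_of_lt_of_le (Real.sqrt_pos.mpr hc₀pos) (Real.sqrt_le_sqrt (hg x))
    rw [hf]
    positivity
  positivity
end

section
/- Under the stated assumptions, with z₀ := √(L² + y₀²), the true period admits the change-of-variables representation P = 4·√(m/(2σ)) · ∫_L^{z₀} z/√((1/L₀)·(z² − L²)·(z₀ − z)·(z + z₀ − 2L₀)) dz, where the expression under the square root is a quartic polynomial in z; that is, the integral over y in the definition of P equals this integral over z obtained from the substitution z² = L² + y². -/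
open Real MeasureTheory intervalIntegral Set

set_option maxHeartbeats 1000000 in
theorem rayleigh_period_change_of_variables
    (σ m L₀ L y₀ z₀ P : ℝ)
    (hσ : 0 < σ) (hm : 0 < m) (hL₀ : 0 < L₀) (hL : 0 < L) (hy₀ : 0 < y₀)
    (hLL : L₀ < L)
    (hz₀ : z₀ = Real.sqrt (L ^ 2 + y₀ ^ 2))
    (hP : P = 4 * Real.sqrt (m / (2 * σ)) *
      ∫ y in (0:ℝ)..y₀,
        1 / (Real.sqrt (y₀ ^ 2 - y ^ 2) *
          Real.sqrt (1 / L₀ -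
            2 / (Real.sqrt (L ^ 2 + y ^ 2) + Real.sqrt (L ^ 2 + y₀ ^ 2))))) :
    P = 4 * Real.sqrt (m / (2 * σ)) *
      ∫ z in L..z₀,
        z / Real.sqrt ((1 / L₀) * (z ^ 2 - L ^ 2) * (z₀ - z) * (z + z₀ - 2 * L₀)) := by
  have hz₀sq : z₀ ^ 2 = L ^ 2 + y₀ ^ 2 := by
    rw [hz₀, Real.sq_sqrt (by positivity)]
  have hz₀pos : 0 < z₀ := by rw [hz₀]; positivity
  have hLz : L < z₀ := by nlinarith
  -- derivative
  have hφd : ∀ y : ℝ, HasDerivAt (fun t => Real.sqrt (L ^ 2 + t ^ 2))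
      (y / Real.sqrt (L ^ 2 + y ^ 2)) y := by
    intro y
    have h1 : HasDerivAt (fun t : ℝ => L ^ 2 + t ^ 2) (2 * y) y := by
      simpa using (hasDerivAt_pow 2 y).const_add (L ^ 2)
    have hne : (L ^ 2 + y ^ 2) ≠ 0 := by positivity
    have h2 := (Real.hasDerivAt_sqrt hne).comp y h1
    have h3 : 1 / (2 * Real.sqrt (L ^ 2 + y ^ 2)) * (2 * y)
        = y / Real.sqrt (L ^ 2 + y ^ 2) := by
      have : Real.sqrt (L ^ 2 + y ^ 2) ≠ 0 := by positivity
      field_simp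
    have h4 : HasDerivAt (fun t => Real.sqrt (L ^ 2 + t ^ 2))
        (1 / (2 * Real.sqrt (L ^ 2 + y ^ 2)) * (2 * y)) y := h2
    rw [← h3]
    exact h4
  -- image
  have hsq : ∀ y : ℝ, (Real.sqrt (L ^ 2 + y ^ 2)) ^ 2 = L ^ 2 + y ^ 2 := fun y =>
    Real.sq_sqrt (by positivity)
  have hφpos : ∀ y : ℝ, 0 < Real.sqrt (L ^ 2 + y ^ 2) := fun y => by positivity
  have himg : (fun y => Real.sqrt (L ^ 2 + y ^ 2)) '' Ioo 0 y₀ = Ioo L z₀ := by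
    ext z
    constructor
    · rintro ⟨y, ⟨hy0, hyy⟩, rfl⟩
      refine ⟨?_, ?_⟩
      · have := hsq y
        nlinarith [hφpos y]
      · have := hsq y
        nlinarith [hφpos y]
    · rintro ⟨h1, h2⟩
      have hzpos : 0 < z := hL.trans h1
      have hz2 : L ^ 2 < z ^ 2 := by nlinarith
      have hz2' : z ^ 2 < z₀ ^ 2 := by nlinarith
      refine ⟨Real.sqrt (z ^ 2 - L ^ 2), ⟨Real.sqrt_pos.mpr (by linarith), ?_⟩, ?_⟩
      · have h3 : Real.sqrt (z ^ 2 - L ^ 2) < Real.sqrt (y₀ ^ 2) :=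
          Real.sqrt_lt_sqrt (by linarith) (by nlinarith)
        rwa [Real.sqrt_sq hy₀.le] at h3
      · have h4 : L ^ 2 + (Real.sqrt (z ^ 2 - L ^ 2)) ^ 2 = z ^ 2 := by
          rw [Real.sq_sqrt (by linarith)]; ring
        simp only [h4]
        exact Real.sqrt_sq hzpos.le
  -- injectivity
  have hinj : InjOn (fun y => Real.sqrt (L ^ 2 + y ^ 2)) (Ioo 0 y₀) := by
    intro a ha b hb hab
    simp only at hab
    have h2 : L ^ 2 + a ^ 2 = L ^ 2 + b ^ 2 := by
      have := congrArg (· ^ 2) hab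
      simpa [hsq] using this
    have h3 : a ^ 2 = b ^ 2 := by linarith
    calc a = Real.sqrt (a ^ 2) := (Real.sqrt_sq ha.1.le).symm
      _ = Real.sqrt (b ^ 2) := by rw [h3]
      _ = b := Real.sqrt_sq hb.1.le
  have key : (∫ y in (0:ℝ)..y₀,
        1 / (Real.sqrt (y₀ ^ 2 - y ^ 2) *
          Real.sqrt (1 / L₀ -
            2 / (Real.sqrt (L ^ 2 + y ^ 2) + Real.sqrt (L ^ 2 + y₀ ^ 2)))))
      = ∫ z in L..z₀,
        z / Real.sqrt ((1 / L₀) * (z ^ 2 - L ^ 2) * (z₀ - z) * (z + z₀ - 2 * L₀)) := by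
    rw [intervalIntegral.integral_of_le hLz.le, intervalIntegral.integral_of_le hy₀.le,
        MeasureTheory.integral_Ioc_eq_integral_Ioo, MeasureTheory.integral_Ioc_eq_integral_Ioo,
        ← himg,
        MeasureTheory.integral_image_eq_integral_abs_deriv_smul measurableSet_Ioo
          (fun y _ => (hφd y).hasDerivWithinAt) hinj]
    apply MeasureTheory.setIntegral_congr_fun measurableSet_Ioo
    intro y hy
    obtain ⟨hy0, hyy⟩ := hy
    set z := Real.sqrt (L ^ 2 + y ^ 2) with hzdef
    have hzsq : z ^ 2 = L ^ 2 + y ^ 2 := hsq y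
    have hzpos : 0 < z := hφpos y
    have hzL : L < z := by nlinarith
    have hzz₀ : z < z₀ := by nlinarith
    have hsum : 0 < z + z₀ - 2 * L₀ := by linarith
    have hdiff : 0 < z₀ - z := by linarith
    have hzsum : 0 < z + z₀ := by linarith
    have hEs : Real.sqrt ((z₀ - z) * (z + z₀ - 2 * L₀) / L₀) ≠ 0 := by positivity
    have hz₀' : Real.sqrt (L ^ 2 + y₀ ^ 2) = z₀ := hz₀.symm
    simp only [smul_eq_mul, hz₀']
    have e1 : (1 : ℝ) / L₀ * (z ^ 2 - L ^ 2) * (z₀ - z) * (z + z₀ - 2 * L₀)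
        = y ^ 2 * ((z₀ - z) * (z + z₀ - 2 * L₀) / L₀) := by
      rw [hzsq]; field_simp; ring
    have e2 : y₀ ^ 2 - y ^ 2 = (z₀ - z) * (z₀ + z) := by nlinarith
    have e3 : (1 : ℝ) / L₀ - 2 / (z + z₀) = (z + z₀ - 2 * L₀) / (L₀ * (z + z₀)) := by
      rw [div_sub_div _ _ hL₀.ne' hzsum.ne', div_eq_div_iff (by positivity) (by positivity)]
      ring
    rw [e1, e2, e3, Real.sqrt_mul (sq_nonneg y), Real.sqrt_sq hy0.le,
        ← Real.sqrt_mul (by nlinarith : (0:ℝ) ≤ (z₀ - z) * (z₀ + z))]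
    have e4 : (z₀ - z) * (z₀ + z) * ((z + z₀ - 2 * L₀) / (L₀ * (z + z₀)))
        = (z₀ - z) * (z + z₀ - 2 * L₀) / L₀ := by
      field_simp
      ring
    rw [e4, abs_of_pos (show (0:ℝ) < y / z by positivity), ← hzdef, one_div]
    rw [div_mul_div_comm]
    rw [eq_div_iff (by positivity : z * (y * Real.sqrt ((z₀ - z) * (z + z₀ - 2 * L₀) / L₀)) ≠ 0)]
    field_simp
  rw [hP, key]
end
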